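/- Let h be a complex Hilbert space, h_inv a closed subspace, and h_⊥ its orthogonal complement. Let ψ be an element of the n-fold symmetric tensor power of h. If the contraction of ψ against ξ in the first tensor slot (i.e., the map φ ↦ ⟨ξ ⊗ η, ψ⟩ for all η) vanishes for every ξ ∈ h_⊥, then ψ lies in the n-fold symmetric tensor power of h_inv. -/

import Mathlib

open scoped ComplexInnerProductSpace BigOperators

/-- If `ψ` is in the `(n+1)`-fold symmetric tensor power of a Hilbert space `h`
(realized inside a Hilbert space `E` via a tensor map `T` with
`⟨T v, T w⟩ = ∏ i ⟨v i, w i⟩` and dense span, symmetry being expressed weakly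
against elementary tensors), and its contraction in the first slot against every
`ξ` in the orthogonal complement of a closed subspace `h_inv` vanishes, then `ψ`
lies in the (symmetric) tensor power of `h_inv`, i.e. in the closed span of the
elementary tensors with all entries from `h_inv`. -/
theorem statement1 {h E : Type*}
    [NormedAddCommGroup h] [InnerProductSpace ℂ h] [CompleteSpace h]
    [NormedAddCommGroup E] [InnerProductSpace ℂ E] [CompleteSpace E]
    (n : ℕ) (T : (Fin (n + 1) → h) → E)
    (hT_inner : ∀ v w : Fin (n + 1) → h, ⟪T v, T w⟫ = ∏ i, ⟪v i, w i⟫)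
    (hT_dense : Dense ((Submodule.span ℂ (Set.range T) : Submodule ℂ E) : Set E))
    (hinv : Submodule ℂ h) (hcl : IsClosed (hinv : Set h))
    (ψ : E)
    (hsymm : ∀ (σ : Equiv.Perm (Fin (n + 1))) (v : Fin (n + 1) → h),
      ⟪T (v ∘ σ), ψ⟫ = ⟪T v, ψ⟫)
    (hcontr : ∀ ξ ∈ hinvᗮ, ∀ w : Fin n → h, ⟪T (Fin.cons ξ w), ψ⟫ = 0) :
    ψ ∈ (Submodule.span ℂ (T '' {v | ∀ i, v i ∈ hinv})).topologicalClosure := by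
  classical
  -- if something is orthogonal to all T w, it is zero
  have hzero : ∀ d : E, (∀ w : Fin (n + 1) → h, ⟪T w, d⟫ = 0) → d = 0 := by
    intro d hd
    have hmem : d ∈ (Submodule.span ℂ (Set.range T))ᗮ := by
      rw [Submodule.mem_orthogonal]
      intro u hu
      induction hu using Submodule.span_induction with
      | mem x hx => obtain ⟨w, rfl⟩ := hx; exact hd w
      | zero => simp
      | add x y _ _ hx hy => simp [inner_add_left, hx, hy]
      | smul c x _ hx => simp [inner_smul_left, hx]
    have hbot : (Submodule.span ℂ (Set.range T))ᗮ = ⊥ :=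
      Submodule.topologicalClosure_eq_top_iff.mp
        (Submodule.dense_iff_topologicalClosure_eq_top.mp hT_dense)
    rw [hbot] at hmem
    simpa using hmem
  -- product of inner products with one slot updated
  have hprod : ∀ (w v : Fin (n + 1) → h) (j : Fin (n + 1)) (y : h),
      (∏ i, ⟪w i, Function.update v j y i⟫) =
        ⟪w j, y⟫ * ∏ i ∈ Finset.univ \ {j}, ⟪w i, v i⟫ := by
    intro w v j y
    have : (fun i => ⟪w i, Function.update v j y i⟫) =
        Function.update (fun i => ⟪w i, v i⟫) j ⟪w j, y⟫ := by
      funext i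
      by_cases hi : i = j
      · subst hi; simp
      · simp [Function.update_of_ne hi]
    rw [this, Finset.prod_update_of_mem (Finset.mem_univ j)]
  -- T is multilinear
  let M : MultilinearMap ℂ (fun _ : Fin (n + 1) => h) E :=
    { toFun := T
      map_update_add' := by
        intro _ v j y z
        have := Subsingleton.elim ‹_› (instDecidableEqFin (n+1))
        subst this
        refine sub_eq_zero.mp (hzero _ fun w => ?_)
        simp only [inner_sub_right, hT_inner, hprod, inner_add_right]
        ring
      map_update_smul' := by
        intro _ v j c y
        have := Subsingleton.elim ‹_› (instDecidableEqFin (n+1))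
        subst this
        refine sub_eq_zero.mp (hzero _ fun w => ?_)
        simp only [inner_sub_right, hT_inner, hprod, inner_smul_right]
        ring }
  set S := (Submodule.span ℂ (T '' {v | ∀ i, v i ∈ hinv})).topologicalClosure with hS
  haveI : CompleteSpace S :=
    (Submodule.isClosed_topologicalClosure _).completeSpace_coe
  obtain ⟨p, hp, q, hq, hpq⟩ := S.exists_add_mem_mem_orthogonal ψ
  -- T u ⊥ S whenever some slot of u lies in hinvᗮ
  have horthS : ∀ (u : Fin (n + 1) → h) (j : Fin (n + 1)), u j ∈ hinvᗮ →
      ∀ y ∈ S, ⟪T u, y⟫ = 0 := by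
    intro u j hj y hy
    have hle : S ≤ (innerSL ℂ (T u)).ker := by
      refine Submodule.topologicalClosure_minimal _ ?_ (ContinuousLinearMap.isClosed_ker _)
      rw [Submodule.span_le]
      rintro _ ⟨w, hw, rfl⟩
      simp only [SetLike.mem_coe, LinearMap.mem_ker, innerSL_apply_apply]
      show ⟪T u, T w⟫ = 0
      rw [hT_inner]
      exact Finset.prod_eq_zero (Finset.mem_univ j) ((Submodule.mem_orthogonal' hinv (u j)).mp hj (w j) (hw j))
    exact hle hy
  -- ⟪T u, ψ⟫ = 0 whenever some slot of u lies in hinvᗮ (using symmetry)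
  have hsym0 : ∀ (u : Fin (n + 1) → h) (j : Fin (n + 1)), u j ∈ hinvᗮ →
      ⟪T u, ψ⟫ = 0 := by
    intro u j hj
    have h1 := hsymm (Equiv.swap 0 j) u
    rw [← h1]
    set u' := u ∘ Equiv.swap 0 j with hu'
    have h0 : u' 0 = u j := by simp [hu']
    have h2 : u' = Fin.cons (u' 0) (Fin.tail u') := (Fin.cons_self_tail u').symm
    rw [h2, h0]
    exact hcontr (u j) hj (Fin.tail u')
  -- main claim: q = 0
  have hq0 : q = 0 := by
    refine hzero q fun v => ?_
    haveI : CompleteSpace hinv := hcl.completeSpace_coe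
    set a : Fin (n + 1) → h := fun i => (hinv.orthogonalProjectionOnto (v i) : h) with ha
    set b : Fin (n + 1) → h := fun i => v i - a i with hb
    have hv : v = a + b := by funext i; simp [hb]
    have hbmem : ∀ i, b i ∈ hinvᗮ := fun i =>
      hinv.sub_starProjection_mem_orthogonal (v i)
    have hexp : T v = ∑ s : Finset (Fin (n + 1)), T (s.piecewise a b) := by
      have h3 := M.map_add_univ a b
      rw [← hv] at h3
      exact h3
    rw [hexp, sum_inner]
    refine Finset.sum_eq_zero fun s _ => ?_
    by_cases hs : s = Finset.univ
    · subst hs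
      have : (Finset.univ : Finset (Fin (n + 1))).piecewise a b = a := by
        funext i; simp
      rw [this]
      have hTa : T a ∈ S :=
        Submodule.le_topologicalClosure _
          (Submodule.subset_span ⟨a, fun i => (hinv.orthogonalProjectionOnto (v i)).2, rfl⟩)
      exact (Submodule.mem_orthogonal S q).mp hq (T a) hTa
    · obtain ⟨j, hj⟩ : ∃ j, j ∉ s := by
        by_contra hc
        push_neg at hc
        exact hs (Finset.eq_univ_iff_forall.mpr hc)
      set u := s.piecewise a b with hu
      have huj : u j ∈ hinvᗮ := by
        have : u j = b j := Finset.piecewise_eq_of_notMem _ _ _ hj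
        rw [this]; exact hbmem j
      calc ⟪T u, q⟫ = ⟪T u, ψ⟫ - ⟪T u, p⟫ := by rw [hpq, inner_add_right]; ring
        _ = 0 := by rw [hsym0 u j huj, horthS u j huj p hp]; ring
  rw [hpq, hq0, add_zero]
  exact hp
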